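/- Let F : ℝⁿ → Set ℝⁿ be upper semicontinuous with F(x) nonempty, compact, and convex for every x, let X_o, X_u ⊆ ℝⁿ, and let B : ℝⁿ → ℝ be a barrier function candidate with respect to (X_o, X_u) with zero-sublevel set K. If there exists a continuous function ε : ℝⁿ → (0,∞) such that K is forward invariant for the strongly perturbed system Σ^s_ε, and the boundary ∂K is bounded, then the system ẋ ∈ F(x) is uniformly strongly robustly safe with respect to (X_o, X_u). -/

import Mathlib

open Metric Set Filter MeasureTheory
open scoped Pointwise RealInnerProductSpace Topology

variable {E : Type*} [NormedAddCommGroup E] [NormedSpace ℝ E]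

/-- Admissible solution domains: `[0,T]`, `[0,T)`, or `[0,∞)`. -/
def SolDomain (D : Set ℝ) : Prop :=
  (∃ T : ℝ, 0 ≤ T ∧ D = Set.Icc 0 T) ∨ (∃ T : ℝ, 0 < T ∧ D = Set.Ico 0 T) ∨ D = Set.Ici 0

/-- `φ` is a (locally absolutely continuous) solution of `ẋ ∈ F x` on `D`,
expressed in integral form: `φ t = φ 0 + ∫₀ᵗ v`, with `v t ∈ F (φ t)` a.e. on `D`. -/
def IsSolutionOn (F : E → Set E) (φ : ℝ → E) (D : Set ℝ) : Prop :=
  SolDomain D ∧ ∃ v : ℝ → E,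
    (∀ t ∈ D, MeasureTheory.IntegrableOn v (Set.Icc 0 t)) ∧
    (∀ t ∈ D, φ t = φ 0 + ∫ s in (0:ℝ)..t, v s) ∧
    (∀ᵐ t ∂(MeasureTheory.volume.restrict D), v t ∈ F (φ t))

/-- Safety: no solution starting in `Xo` ever reaches `Xu`. -/
def Safe (F : E → Set E) (Xo Xu : Set E) : Prop :=
  ∀ (φ : ℝ → E) (D : Set ℝ), IsSolutionOn F φ D → φ 0 ∈ Xo → ∀ t ∈ D, φ t ∉ Xu

/-- Forward invariance of `K`. -/
def ForwardInvariant (F : E → Set E) (K : Set E) : Prop :=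
  ∀ (φ : ℝ → E) (D : Set ℝ), IsSolutionOn F φ D → φ 0 ∈ K → ∀ t ∈ D, φ t ∈ K

/-- Image of a set under a set-valued map: `F(S) = ⋃_{y ∈ S} F(y)`. -/
def svImage (F : E → Set E) (S : Set E) : Set E := ⋃ y ∈ S, F y

/-- Right-hand side of the strongly perturbed system `Σ^s_ε`:
`conv (F (x + ε(x)𝔹)) + ε(x)𝔹`. -/
def strongPert (F : E → Set E) (ε : E → ℝ) (x : E) : Set E :=
  convexHull ℝ (svImage F (Metric.closedBall x (ε x))) + Metric.closedBall (0:E) (ε x)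

/-- Right-hand side of the (ordinary) perturbed system `Σ_ε`: `F x + ε(x)𝔹`. -/
def pert (F : E → Set E) (ε : E → ℝ) (x : E) : Set E :=
  F x + Metric.closedBall (0:E) (ε x)

def RobustlySafe (F : E → Set E) (Xo Xu : Set E) : Prop :=
  ∃ ε : E → ℝ, Continuous ε ∧ (∀ x, 0 < ε x) ∧ Safe (pert F ε) Xo Xu

def StronglyRobustlySafe (F : E → Set E) (Xo Xu : Set E) : Prop :=
  ∃ ε : E → ℝ, Continuous ε ∧ (∀ x, 0 < ε x) ∧ Safe (strongPert F ε) Xo Xu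

def UniformlyStronglyRobustlySafe (F : E → Set E) (Xo Xu : Set E) : Prop :=
  ∃ ε : ℝ, 0 < ε ∧ Safe (strongPert F (fun _ => ε)) Xo Xu

/-- Upper semicontinuity of a set-valued map. -/
def UpperSemicontinuousSV (F : E → Set E) : Prop :=
  ∀ x : E, ∀ U : Set E, IsOpen U → F x ⊆ U → ∀ᶠ y in nhds x, F y ⊆ U

/-- Lower semicontinuity of a set-valued map (sequential form). -/
def LowerSemicontinuousSV (F : E → Set E) : Prop :=
  ∀ x : E, ∀ y ∈ F x, ∀ u : ℕ → E, Filter.Tendsto u Filter.atTop (nhds x) →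
    ∃ v : ℕ → E, (∀ i, v i ∈ F (u i)) ∧ Filter.Tendsto v Filter.atTop (nhds y)

private lemma svImage_mono' (F : E → Set E) {S T : Set E} (h : S ⊆ T) :
    svImage F S ⊆ svImage F T :=
  Set.biUnion_subset_biUnion_left h

private lemma strongPert_mono' (F : E → Set E) {c : ℝ} {ε : E → ℝ} {x : E} (h : c ≤ ε x) :
    strongPert F (fun _ => c) x ⊆ strongPert F ε x :=
  Set.add_subset_add (convexHull_mono (svImage_mono' F (Metric.closedBall_subset_closedBall h)))
    (Metric.closedBall_subset_closedBall h)

private lemma SolDomain.icc_subset' {D : Set ℝ} (hD : SolDomain D) {t : ℝ} (ht : t ∈ D) :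
    Set.Icc 0 t ⊆ D := by
  rcases hD with ⟨T, _, rfl⟩ | ⟨T, _, rfl⟩ | rfl
  · exact Set.Icc_subset_Icc le_rfl ht.2
  · exact fun s hs => ⟨hs.1, lt_of_le_of_lt hs.2 ht.2⟩
  · exact fun s hs => hs.1

private lemma SolDomain.nonneg' {D : Set ℝ} (hD : SolDomain D) {t : ℝ} (ht : t ∈ D) :
    0 ≤ t := by
  rcases hD with ⟨T, _, rfl⟩ | ⟨T, _, rfl⟩ | rfl
  · exact ht.1
  · exact ht.1
  · exact ht

set_option maxHeartbeats 8000000 in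
/-- If the zero-sublevel set `K` of a barrier function candidate is forward
invariant for `Σ^s_ε` for some continuous positive `ε`, and `∂K` is bounded, then
`ẋ ∈ F x` is uniformly strongly robustly safe. -/
theorem stmt5 {n : ℕ} (F : EuclideanSpace ℝ (Fin n) → Set (EuclideanSpace ℝ (Fin n)))
    (hFusc : UpperSemicontinuousSV F)
    (hFne : ∀ x, (F x).Nonempty) (hFcpt : ∀ x, IsCompact (F x)) (hFcvx : ∀ x, Convex ℝ (F x))
    (Xo Xu : Set (EuclideanSpace ℝ (Fin n))) (B : EuclideanSpace ℝ (Fin n) → ℝ)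
    (hBu : ∀ x ∈ Xu, 0 < B x) (hBo : ∀ x ∈ Xo, B x ≤ 0)
    (ε : EuclideanSpace ℝ (Fin n) → ℝ) (hεc : Continuous ε) (hεpos : ∀ x, 0 < ε x)
    (hInv : ForwardInvariant (strongPert F ε) {x | B x ≤ 0})
    (hbd : Bornology.IsBounded (frontier {x | B x ≤ 0})) :
    UniformlyStronglyRobustlySafe F Xo Xu := by
  classical
  set K : Set (EuclideanSpace ℝ (Fin n)) := {x | B x ≤ 0} with hKdef
  obtain ⟨R, hR⟩ := hbd.subset_closedBall 0
  set R' : ℝ := |R| + 1 with hR'def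
  have hR'pos : (0:ℝ) ≤ R' := by positivity
  have hcb : IsCompact (Metric.closedBall (0:EuclideanSpace ℝ (Fin n)) R') :=
    isCompact_closedBall _ _
  have hne : (Metric.closedBall (0:EuclideanSpace ℝ (Fin n)) R').Nonempty :=
    ⟨0, Metric.mem_closedBall_self hR'pos⟩
  obtain ⟨x₀, hx₀, hmin⟩ := hcb.exists_isMinOn hne hεc.continuousOn
  set c := ε x₀ with hcdef
  have hc : 0 < c := hεpos x₀
  refine ⟨c, hc, ?_⟩
  -- Forward invariance of K under the constant perturbation
  have inv : ForwardInvariant (strongPert F (fun _ => c)) K := by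
    intro φ D hsol h0 t ht
    by_contra htK
    obtain ⟨hD, v, hint, heq, hae⟩ := hsol
    have hIccD : Set.Icc 0 t ⊆ D := hD.icc_subset' ht
    have ht0 : (0:ℝ) ≤ t := hD.nonneg' ht
    -- continuity of φ on [0, t]
    have hvInt : MeasureTheory.IntegrableOn v (Set.Icc 0 t) := hint t ht
    have hcont : ContinuousOn φ (Set.Icc 0 t) := by
      have h1 : ContinuousOn (fun x => φ 0 + ∫ s in (0:ℝ)..x, v s) (Set.Icc 0 t) := by
        have h2 := intervalIntegral.continuousOn_primitive_interval
          (f := v) (μ := volume) (a := 0) (b := t)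
          (by rw [Set.uIcc_of_le ht0]; exact hvInt)
        rw [Set.uIcc_of_le ht0] at h2
        exact continuousOn_const.add h2
      exact h1.congr (fun s hs => heq s (hIccD hs))
    set S : Set ℝ := {s | s ∈ Set.Icc 0 t ∧ φ s ∈ K} with hSdef
    have hS0 : (0:ℝ) ∈ S := ⟨⟨le_rfl, ht0⟩, h0⟩
    have hSne : S.Nonempty := ⟨0, hS0⟩
    have hSbdd : BddAbove S := ⟨t, fun s hs => hs.1.2⟩
    set u := sSup S with hudef
    have huS : u ∈ Set.Icc 0 t := ⟨le_csSup hSbdd hS0, csSup_le hSne (fun s hs => hs.1.2)⟩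
    have hgt : ∀ s ∈ Set.Icc 0 t, u < s → φ s ∉ K := fun s hs hus hK' =>
      absurd (le_csSup hSbdd ⟨hs, hK'⟩) (not_le.mpr hus)
    -- φ u lies on the frontier of K
    have hclK : φ u ∈ closure K := by
      have h1 : u ∈ closure S := csSup_mem_closure hSne hSbdd
      have h2 : ContinuousWithinAt φ S u := (hcont u huS).mono (fun s hs => hs.1)
      refine closure_mono ?_ (h2.mem_closure_image h1)
      rintro y ⟨s, hs, rfl⟩
      exact hs.2
    have hclKc : φ u ∈ closure Kᶜ := by
      rcases eq_or_lt_of_le huS.2 with h | h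
      · exact subset_closure (h ▸ htK)
      · have h1 : u ∈ closure (Set.Ioc u t) := by
          rw [closure_Ioc h.ne]; exact ⟨le_rfl, huS.2⟩
        have h2 : ContinuousWithinAt φ (Set.Ioc u t) u :=
          (hcont u huS).mono (fun s hs => ⟨le_trans huS.1 hs.1.le, hs.2⟩)
        refine closure_mono ?_ (h2.mem_closure_image h1)
        rintro y ⟨s, hs, rfl⟩
        exact hgt s ⟨le_trans huS.1 hs.1.le, hs.2⟩ hs.1
    have hfr : φ u ∈ frontier K := by
      rw [frontier_eq_closure_inter_closure]; exact ⟨hclK, hclKc⟩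
    have hnormu : dist (φ u) 0 ≤ |R| := le_trans (Metric.mem_closedBall.mp (hR hfr)) (le_abs_self R)
    -- lower bound for ε near φ u
    have hεball : ∀ x : EuclideanSpace ℝ (Fin n), dist x (φ u) ≤ 1 → c ≤ ε x := by
      intro x hx
      refine hmin ?_
      have : dist x 0 ≤ dist x (φ u) + dist (φ u) 0 := dist_triangle _ _ _
      exact Metric.mem_closedBall.mpr (by rw [hR'def]; linarith)
    -- choose τ ∈ S close to u
    have hcu : ContinuousWithinAt φ (Set.Icc 0 t) u := hcont u huS
    obtain ⟨η, hη, hη'⟩ := Metric.continuousWithinAt_iff.mp hcu (1/2) (by norm_num)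
    obtain ⟨τ, hτS, hτ⟩ := exists_lt_of_lt_csSup hSne (show u - η < sSup S by
      rw [← hudef]; linarith)
    have hτu : τ ≤ u := le_csSup hSbdd hτS
    have hτ0 : (0:ℝ) ≤ τ := hτS.1.1
    have hnear : ∀ s ∈ Set.Icc τ u, dist (φ s) (φ u) < 1/2 := by
      intro s hs
      refine hη' ⟨le_trans hτ0 hs.1, le_trans hs.2 huS.2⟩ ?_
      rw [Real.dist_eq, abs_of_nonpos (by linarith [hs.2])]
      linarith [hs.1]
    -- key: if φ stays near φ u on [τ, w), then φ stays in K on [τ, w]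
    have key : ∀ w, w ∈ Set.Icc τ t → (∀ s ∈ Set.Ico τ w, dist (φ s) (φ u) < 1) →
        ∀ s ∈ Set.Icc τ w, φ s ∈ K := by
      intro w hw hball s hs
      have hτw : τ ≤ w := hw.1
      have hwt : w ≤ t := hw.2
      set ψ : ℝ → EuclideanSpace ℝ (Fin n) := fun r => φ (τ + r) with hψdef
      have hsolψ : IsSolutionOn (strongPert F ε) ψ (Set.Icc 0 (w - τ)) := by
        refine ⟨Or.inl ⟨w - τ, by linarith, rfl⟩, fun r => v (τ + r), ?_, ?_, ?_⟩
        · intro r hr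
          have hpre : (fun x : ℝ => τ + x) ⁻¹' Set.Icc τ (τ + r) = Set.Icc 0 r := by
            ext x
            simp only [Set.mem_preimage, Set.mem_Icc]
            constructor <;> intro h <;> constructor <;> linarith [h.1, h.2]
          have hmp : MeasureTheory.MeasurePreserving (fun x : ℝ => τ + x)
              (volume.restrict (Set.Icc 0 r)) (volume.restrict (Set.Icc τ (τ + r))) := by
            have := (MeasureTheory.measurePreserving_add_left volume τ).restrict_preimage
              (s := Set.Icc τ (τ + r)) measurableSet_Icc
            rwa [hpre] at this
          have hvint : MeasureTheory.IntegrableOn v (Set.Icc τ (τ + r)) :=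
            hvInt.mono_set (Set.Icc_subset_Icc hτ0 (by linarith [hr.2]))
          exact (hmp.integrable_comp_emb
            (MeasurableEquiv.addLeft τ).measurableEmbedding).mpr hvint
        · intro r hr
          have hr0 : (0:ℝ) ≤ r := hr.1
          have hmem : τ + r ∈ Set.Icc 0 t := ⟨by linarith, by linarith [hr.2]⟩
          have e1 : φ (τ + r) = φ 0 + ∫ s in (0:ℝ)..(τ + r), v s := heq _ (hIccD hmem)
          have e2 : φ τ = φ 0 + ∫ s in (0:ℝ)..τ, v s :=
            heq _ (hIccD ⟨hτ0, le_trans hτu huS.2⟩)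
          have hii1 : IntervalIntegrable v volume 0 τ := by
            refine MeasureTheory.IntegrableOn.intervalIntegrable (hvInt.mono_set ?_)
            rw [Set.uIcc_of_le hτ0]
            exact Set.Icc_subset_Icc le_rfl (le_trans hτu huS.2)
          have hii2 : IntervalIntegrable v volume τ (τ + r) := by
            refine MeasureTheory.IntegrableOn.intervalIntegrable (hvInt.mono_set ?_)
            rw [Set.uIcc_of_le (by linarith : τ ≤ τ + r)]
            exact Set.Icc_subset_Icc hτ0 (by linarith [hr.2])
          have hadd : (∫ s in (0:ℝ)..τ, v s) + (∫ s in τ..(τ + r), v s)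
              = ∫ s in (0:ℝ)..(τ + r), v s :=
            intervalIntegral.integral_add_adjacent_intervals hii1 hii2
          have hcomp : (∫ s in (0:ℝ)..r, v (τ + s)) = ∫ s in τ..(τ + r), v s := by
            simpa using intervalIntegral.integral_comp_add_left (a := (0:ℝ)) (b := r) v τ
          show φ (τ + r) = φ (τ + 0) + ∫ s in (0:ℝ)..r, v (τ + s)
          rw [add_zero, e1, e2, hcomp, ← hadd, add_assoc]
        · have hpre : (fun x : ℝ => τ + x) ⁻¹' Set.Icc τ w = Set.Icc 0 (w - τ) := by
            ext x
            simp only [Set.mem_preimage, Set.mem_Icc]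
            constructor <;> intro h <;> constructor <;> linarith [h.1, h.2]
          have hmp : MeasureTheory.MeasurePreserving (fun x : ℝ => τ + x)
              (volume.restrict (Set.Icc 0 (w - τ))) (volume.restrict (Set.Icc τ w)) := by
            have := (MeasureTheory.measurePreserving_add_left volume τ).restrict_preimage
              (s := Set.Icc τ w) measurableSet_Icc
            rwa [hpre] at this
          have hsubD : Set.Icc τ w ⊆ D := fun s hs =>
            hIccD ⟨le_trans hτ0 hs.1, le_trans hs.2 hwt⟩
          have h1 : ∀ᵐ r ∂(volume.restrict (Set.Icc τ w)),
              v r ∈ strongPert F (fun _ => c) (φ r) :=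
            MeasureTheory.ae_restrict_of_ae_restrict_of_subset hsubD hae
          have h2 : ∀ᵐ r ∂(volume.restrict (Set.Icc τ w)), r ∈ Set.Icc τ w :=
            MeasureTheory.ae_restrict_mem measurableSet_Icc
          have h3 : ∀ᵐ r ∂(volume.restrict (Set.Icc τ w)), r ≠ w := by
            refine MeasureTheory.ae_restrict_of_ae ?_
            have hset : {r : ℝ | ¬ r ≠ w} = {w} := by ext x; simp
            rw [MeasureTheory.ae_iff, hset]
            exact MeasureTheory.measure_singleton w
          have hae' : ∀ᵐ r ∂(volume.restrict (Set.Icc τ w)),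
              v r ∈ strongPert F ε (φ r) := by
            filter_upwards [h1, h2, h3] with r hr1 hr2 hr3
            refine strongPert_mono' F ?_ hr1
            exact hεball _ (le_of_lt (hball r ⟨hr2.1, lt_of_le_of_ne hr2.2 hr3⟩))
          show ∀ᵐ r ∂(volume.restrict (Set.Icc 0 (w - τ))),
            v (τ + r) ∈ strongPert F ε (φ (τ + r))
          exact hmp.quasiMeasurePreserving.tendsto_ae.eventually hae'
      have hψ0 : ψ 0 ∈ K := by
        show φ (τ + 0) ∈ K
        rw [add_zero]; exact hτS.2
      have hmem : s - τ ∈ Set.Icc 0 (w - τ) := ⟨by linarith [hs.1], by linarith [hs.2]⟩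
      have := hInv ψ _ hsolψ hψ0 (s - τ) hmem
      have hst : τ + (s - τ) = s := by ring
      rw [hψdef] at this
      simp only [hst] at this
      exact this
    -- conclude by the first-exit argument
    set W : Set ℝ := {s | s ∈ Set.Icc τ t ∧ 1 ≤ dist (φ s) (φ u)} with hWdef
    have hτt : τ ≤ t := le_trans hτu huS.2
    by_cases hWne : W.Nonempty
    · have hWclosed : IsClosed W := by
        have hWeq : W = Set.Icc τ t ∩ (fun s => dist (φ s) (φ u)) ⁻¹' Set.Ici 1 := by
          ext s; simp [hWdef, Set.mem_Icc, and_comm]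
        rw [hWeq]
        refine ContinuousOn.preimage_isClosed_of_isClosed ?_ isClosed_Icc isClosed_Ici
        exact continuous_dist.comp_continuousOn
          ((hcont.mono (Set.Icc_subset_Icc hτ0 le_rfl)).prodMk continuousOn_const)
      have hWbdd : BddBelow W := ⟨τ, fun s hs => hs.1.1⟩
      set w := sInf W with hwdef
      have hwW : w ∈ W := hWclosed.csInf_mem hWne hWbdd
      have hball : ∀ s ∈ Set.Ico τ w, dist (φ s) (φ u) < 1 := by
        intro s hs
        by_contra h
        exact absurd (csInf_le hWbdd ⟨⟨hs.1, (lt_of_lt_of_le hs.2 hwW.1.2).le⟩, not_lt.mp h⟩)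
          (not_le.mpr hs.2)
      have hwK : φ w ∈ K := key w hwW.1 hball w ⟨hwW.1.1, le_rfl⟩
      have hwu : u < w := by
        by_contra h
        push_neg at h
        have := hnear w ⟨hwW.1.1, h⟩
        linarith [hwW.2]
      exact absurd (le_csSup hSbdd ⟨⟨le_trans hτ0 hwW.1.1, hwW.1.2⟩, hwK⟩) (not_le.mpr hwu)
    · have hball : ∀ s ∈ Set.Ico τ t, dist (φ s) (φ u) < 1 := by
        intro s hs
        by_contra h
        exact hWne ⟨s, ⟨hs.1, hs.2.le⟩, not_lt.mp h⟩
      exact htK (key t ⟨hτt, le_rfl⟩ hball t ⟨hτt, le_rfl⟩)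
  -- safety from invariance
  intro φ D hsol h0 t ht hmem
  have h1 : φ 0 ∈ K := hBo _ h0
  have h2 : B (φ t) ≤ 0 := inv φ D hsol h1 t ht
  exact absurd h2 (not_le.mpr (hBu _ hmem))
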